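/- If the global discrepancy attains a local minimum at the cores Q (as a function on the space of all cores), then for every direction c ∈ Fin d and node j ∈ Fin N the function v ↦ ε_{c,j}(Q[c,j := v]) on ℝ^r attains a local minimum at the vector v₀ with v₀(α) = Q(c)(α)(j). -/

import Mathlib

open Finset

/-- Canonical-decomposition approximation:
`F(Q)(i) = ∑ α, ∏ s, Q s α (i s)`. -/
noncomputable def capF (d N r : ℕ) (Q : Fin d → Fin r → Fin N → ℝ)
    (i : Fin d → Fin N) : ℝ :=
  ∑ α : Fin r, ∏ s : Fin d, Q s α (i s)

/-- Residual `R(Q)(i) = F(Q)(i) - T(i)`. -/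
noncomputable def resid (d N r : ℕ) (T : (Fin d → Fin N) → ℝ)
    (Q : Fin d → Fin r → Fin N → ℝ) (i : Fin d → Fin N) : ℝ :=
  capF d N r Q i - T i

/-- Global discrepancy `ε_Σ(Q) = (1/(2 N^d)) ∑ i, R(Q)(i)^2`. -/
noncomputable def epsGlobal (d N r : ℕ) (T : (Fin d → Fin N) → ℝ)
    (Q : Fin d → Fin r → Fin N → ℝ) : ℝ :=
  (1 / (2 * (N : ℝ) ^ d)) * ∑ i : Fin d → Fin N, (resid d N r T Q i) ^ 2

/-- Local discrepancy on the hyperplane `i c = j`: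
`ε_{c,j}(Q) = (1/(2 N^(d-1))) ∑_{i : i c = j} R(Q)(i)^2`. -/
noncomputable def epsLocal (d N r : ℕ) (T : (Fin d → Fin N) → ℝ)
    (Q : Fin d → Fin r → Fin N → ℝ) (c : Fin d) (j : Fin N) : ℝ :=
  (1 / (2 * (N : ℝ) ^ (d - 1))) *
    ∑ i ∈ Finset.univ.filter (fun i : Fin d → Fin N => i c = j),
      (resid d N r T Q i) ^ 2

/-- `Q[c,j := v]`: replace the core vector of direction `c` at node `j` by `v`. -/
def updVec (d N r : ℕ) (Q : Fin d → Fin r → Fin N → ℝ) (c : Fin d) (j : Fin N)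
    (v : Fin r → ℝ) : Fin d → Fin r → Fin N → ℝ :=
  fun s α k => if s = c ∧ k = j then v α else Q s α k

/-- `Q` with the single entry `Q c α j` replaced by `Q c α j + t`. -/
def updOne (d N r : ℕ) (Q : Fin d → Fin r → Fin N → ℝ) (c : Fin d) (α : Fin r)
    (j : Fin N) (t : ℝ) : Fin d → Fin r → Fin N → ℝ :=
  fun s β k => if s = c ∧ β = α ∧ k = j then Q c α j + t else Q s β k
theorem isLocalMin_global_implies_isLocalMin_local (d N r : ℕ) (hd : 0 < d)
    (hN : 0 < N) (hr : 0 < r) (T : (Fin d → Fin N) → ℝ)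
    (Q : Fin d → Fin r → Fin N → ℝ)
    (hmin : IsLocalMin (fun Q' : Fin d → Fin r → Fin N → ℝ => epsGlobal d N r T Q') Q) :
    ∀ (c : Fin d) (j : Fin N),
      IsLocalMin (fun v : Fin r → ℝ => epsLocal d N r T (updVec d N r Q c j v) c j)
        (fun α => Q c α j) := by
  intro c j
  set v₀ : Fin r → ℝ := fun α => Q c α j with hv₀
  have hN0 : (N:ℝ) ≠ 0 := by positivity
  have hupd0 : updVec d N r Q c j v₀ = Q := by
    funext s α k
    simp only [updVec]
    split_ifs with h
    · obtain ⟨h1, h2⟩ := h; subst h1; subst h2; rfl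
    · rfl
  have hcont : ContinuousAt (fun v : Fin r → ℝ => updVec d N r Q c j v) v₀ := by
    apply Continuous.continuousAt
    apply continuous_pi; intro s; apply continuous_pi; intro α; apply continuous_pi; intro k
    simp only [updVec]
    by_cases h : s = c ∧ k = j
    · simp only [h, if_true]; exact continuous_apply α
    · simp only [h, if_false]; exact continuous_const
  have hg : IsLocalMin (fun v : Fin r → ℝ => epsGlobal d N r T (updVec d N r Q c j v)) v₀ := by
    have ht : Filter.Tendsto (fun v : Fin r → ℝ => updVec d N r Q c j v) (nhds v₀) (nhds Q) := by
      have := hcont.tendsto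
      rwa [hupd0] at this
    have h2 := ht.eventually hmin
    unfold IsLocalMin IsMinFilter
    filter_upwards [h2] with v hv
    simpa [hupd0] using hv
  have key : ∀ v : Fin r → ℝ, epsGlobal d N r T (updVec d N r Q c j v)
      = (1/(N:ℝ)) * epsLocal d N r T (updVec d N r Q c j v) c j
        + (1/(2*(N:ℝ)^d)) * ∑ i ∈ Finset.univ.filter (fun i : Fin d → Fin N => ¬ i c = j),
            (resid d N r T Q i)^2 := by
    intro v
    have hres : ∀ i : Fin d → Fin N, i c ≠ j →
        resid d N r T (updVec d N r Q c j v) i = resid d N r T Q i := by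
      intro i hi
      simp only [resid, capF]
      congr 1
      apply Finset.sum_congr rfl
      intro α _
      apply Finset.prod_congr rfl
      intro s _
      simp only [updVec]
      split_ifs with h
      · exact absurd (h.1 ▸ h.2) hi
      · rfl
    have hsplit : ∑ i : Fin d → Fin N, (resid d N r T (updVec d N r Q c j v) i)^2
        = (∑ i ∈ Finset.univ.filter (fun i : Fin d → Fin N => i c = j),
              (resid d N r T (updVec d N r Q c j v) i)^2)
          + ∑ i ∈ Finset.univ.filter (fun i : Fin d → Fin N => ¬ i c = j),
              (resid d N r T Q i)^2 := by
      rw [← Finset.sum_filter_add_sum_filter_not Finset.univ (fun i : Fin d → Fin N => i c = j)]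
      congr 1
      apply Finset.sum_congr rfl
      intro i hi
      rw [hres i (by simpa using (Finset.mem_filter.mp hi).2)]
    unfold epsGlobal epsLocal
    rw [hsplit, mul_add]
    congr 1
    rw [← mul_assoc]
    congr 1
    have hNd : (N:ℝ)^d = N * (N:ℝ)^(d-1) := by
      rw [← pow_succ']
      congr 1
      omega
    rw [hNd]
    field_simp
  have hNpos : (0:ℝ) < (1/(N:ℝ)) := by positivity
  unfold IsLocalMin IsMinFilter at hg ⊢
  filter_upwards [hg] with v hv
  rw [key v, key v₀] at hv
  exact (mul_le_mul_iff_right₀ hNpos).mp (by linarith)
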